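/- Let f ∈ 𝓕 and t ∈ (t⁻, t⁺). Then there exist η > 0 and ε > 0 such that every μ ∈ M_f with λ(μ) > −∞ and h(μ) − t·λ(μ) > p(t) − ε satisfies h(μ) > η. -/

import Mathlib

open MeasureTheory Set Filter Topology
open scoped ENNReal NNReal Classical

noncomputable section

namespace IT

/-- The unit interval `[0,1]` viewed as a subset of `ℝ`. -/
def unitI : Set ℝ := Set.Icc 0 1

/-- The critical set of `f` in `[0,1]`: points where the derivative vanishes. -/
def critSet (f : ℝ → ℝ) : Set ℝ := {x | x ∈ unitI ∧ deriv f x = 0}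

/-- The class `𝓕` of `C^{1+α}` topologically transitive multimodal interval maps with
finitely many non-flat critical points, negative Schwarzian derivative, and critical
orbits that never meet each other (nor themselves). -/
structure MapClassF (f : ℝ → ℝ) : Prop where
  /-- `f` maps `[0,1]` into `[0,1]`. -/
  mapsTo : Set.MapsTo f unitI unitI
  /-- `f` is `C¹`. -/
  smooth : ContDiff ℝ 1 f
  /-- `Df` is `α`-Hölder on `[0,1]` for some `α > 0`. -/
  holder : ∃ α : NNReal, 0 < α ∧ ∃ C : NNReal, HolderOnWith C α (deriv f) unitI
  /-- The critical set is finite. -/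
  critFinite : (critSet f).Finite
  /-- Each critical point is non-flat: `f x = f c + (g x) ^ ℓ` near `c` for a local
  diffeomorphism `g` with `g c = 0` and some critical order `1 < ℓ < ∞`. -/
  nonflat : ∀ c ∈ critSet f, ∃ ℓ : ℝ, 1 < ℓ ∧ ∃ U ∈ nhds c, ∃ g : ℝ → ℝ,
      g c = 0 ∧ ContDiffOn ℝ 1 g U ∧ Set.InjOn g U ∧ (∀ x ∈ U, deriv g x ≠ 0) ∧
      ∀ x ∈ U, f x = f c + g x ^ ℓ
  /-- Negative Schwarzian derivative: `1/√|Df|` is convex on each interval avoiding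
  the critical set. -/
  negSchwarzian : ∀ a b : ℝ, Set.Ioo a b ⊆ unitI \ critSet f →
      ConvexOn ℝ (Set.Ioo a b) fun x => 1 / Real.sqrt |deriv f x|
  /-- `f` is topologically transitive on `[0,1]`. -/
  transitive : ∀ U V : Set ℝ, IsOpen U → IsOpen V →
      (U ∩ unitI).Nonempty → (V ∩ unitI).Nonempty →
      ∃ n : ℕ, (f^[n] '' (U ∩ unitI) ∩ (V ∩ unitI)).Nonempty
  /-- Images of the critical set at different times are disjoint. -/
  critOrbits : ∀ m n : ℕ, m ≠ n → f^[n] '' critSet f ∩ f^[m] '' critSet f = ∅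

/-- `μ ∈ M_f`: `μ` is an `f`-invariant Borel probability measure on `[0,1]`. -/
def InMf (f : ℝ → ℝ) (μ : Measure ℝ) : Prop :=
  IsProbabilityMeasure μ ∧ μ unitI = 1 ∧ μ.map f = μ

/-- A finite Borel partition of `[0,1]`. -/
def IsFinPartition (P : Finset (Set ℝ)) : Prop :=
  (∀ A ∈ P, MeasurableSet A) ∧ (⋃ A ∈ P, A) = unitI ∧
    ∀ A ∈ P, ∀ B ∈ P, A ≠ B → A ∩ B = ∅

/-- The entropy `H_μ(P ∨ f⁻¹ P ∨ ⋯ ∨ f^{-(n-1)} P)` of the `n`-th dynamical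
refinement of the partition `P`. -/
def Hn (f : ℝ → ℝ) (μ : Measure ℝ) (P : Finset (Set ℝ)) (n : ℕ) : ℝ :=
  ∑ σ : Fin n → {A : Set ℝ // A ∈ P},
    Real.negMulLog (μ (⋂ j : Fin n, f^[(j : ℕ)] ⁻¹' (σ j).1)).toReal

/-- The measure-theoretic entropy `h(μ)` of `f` with respect to `μ`: the supremum over
finite Borel partitions of the asymptotic average entropy of refinements. -/
def mEnt (f : ℝ → ℝ) (μ : Measure ℝ) : ℝ :=
  ⨆ P : {P : Finset (Set ℝ) // IsFinPartition P},
    Filter.limsup (fun n : ℕ => Hn f μ P.1 n / n) Filter.atTop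

/-- The Lyapunov exponent `λ(μ) = ∫ log |Df| dμ`. -/
def lyap (f : ℝ → ℝ) (μ : Measure ℝ) : ℝ := ∫ x, Real.log |deriv f x| ∂μ

/-- `λ(μ) > -∞`: since `log |Df|` is bounded above on the (compact) support of `μ`,
this is equivalent to integrability of `log |Df|`. -/
def LyapFinite (f : ℝ → ℝ) (μ : Measure ℝ) : Prop :=
  MeasureTheory.Integrable (fun x => Real.log |deriv f x|) μ

/-- `λ_M := sup {λ(μ) : μ ∈ M_f}`. -/
def lamM (f : ℝ → ℝ) : ℝ :=
  sSup {x | ∃ μ : Measure ℝ, InMf f μ ∧ LyapFinite f μ ∧ x = lyap f μ}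

/-- `λ_m := inf {λ(μ) : μ ∈ M_f}`. -/
def lamm (f : ℝ → ℝ) : ℝ :=
  sInf {x | ∃ μ : Measure ℝ, InMf f μ ∧ LyapFinite f μ ∧ x = lyap f μ}

/-- The pressure function `p(t) = sup {h(μ) - t λ(μ) : μ ∈ M_f, λ(μ) > -∞}`. -/
def press (f : ℝ → ℝ) (t : ℝ) : ℝ :=
  sSup {x | ∃ μ : Measure ℝ, InMf f μ ∧ LyapFinite f μ ∧ x = mEnt f μ - t * lyap f μ}

/-- `t⁺ := sup {t : p(t) > -λ_m t}`, as an extended real number. -/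
def tPlus (f : ℝ → ℝ) : EReal :=
  sSup {s : EReal | ∃ t : ℝ, s = (t : EReal) ∧ -(lamm f) * t < press f t}

/-- `t⁻ := inf {t : p(t) > -λ_M t}`, as an extended real number. -/
def tMinus (f : ℝ → ℝ) : EReal :=
  sInf {s : EReal | ∃ t : ℝ, s = (t : EReal) ∧ -(lamM f) * t < press f t}

/-- `μ` is an equilibrium state for the potential `-t log |Df|`. -/
def EqState (f : ℝ → ℝ) (t : ℝ) (μ : Measure ℝ) : Prop :=
  InMf f μ ∧ LyapFinite f μ ∧ mEnt f μ - t * lyap f μ = press f t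

/-- An acip: an invariant probability measure absolutely continuous with respect to
Lebesgue measure. -/
def IsAcip (f : ℝ → ℝ) (μ : Measure ℝ) : Prop :=
  InMf f μ ∧ μ ≪ (volume : Measure ℝ)

end IT

namespace IT

private def Sset (f : ℝ → ℝ) (u : ℝ) : Set ℝ :=
  {x | ∃ μ : Measure ℝ, InMf f μ ∧ LyapFinite f μ ∧ x = mEnt f μ - u * lyap f μ}

private def Eset (f : ℝ → ℝ) : Set ℝ :=
  {x | ∃ μ : Measure ℝ, InMf f μ ∧ LyapFinite f μ ∧ x = lyap f μ}

private lemma press_eq (f : ℝ → ℝ) (u : ℝ) : press f u = sSup (Sset f u) := rfl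

private lemma lamM_eq (f : ℝ → ℝ) : lamM f = sSup (Eset f) := rfl

private lemma lamm_eq (f : ℝ → ℝ) : lamm f = sInf (Eset f) := rfl

private lemma mem_Sset {f : ℝ → ℝ} {u : ℝ} {μ : Measure ℝ}
    (h1 : InMf f μ) (h2 : LyapFinite f μ) :
    mEnt f μ - u * lyap f μ ∈ Sset f u := ⟨μ, h1, h2, rfl⟩

private lemma mem_Eset {f : ℝ → ℝ} {μ : Measure ℝ}
    (h1 : InMf f μ) (h2 : LyapFinite f μ) : lyap f μ ∈ Eset f := ⟨μ, h1, h2, rfl⟩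

private lemma lyap_le_bound (f : ℝ → ℝ) (hf : MapClassF f) :
    ∃ L : ℝ, ∀ μ : Measure ℝ, InMf f μ → LyapFinite f μ → lyap f μ ≤ L := by
  have hc : Continuous (deriv f) := hf.smooth.continuous_deriv le_rfl
  obtain ⟨K, hKmem⟩ : BddAbove ((fun x => |deriv f x|) '' unitI) := by
    have : IsCompact unitI := isCompact_Icc
    exact this.bddAbove_image (hc.abs.continuousOn)
  have hK : ∀ x ∈ unitI, |deriv f x| ≤ K := fun x hx => hKmem ⟨x, hx, rfl⟩
  have hKnn : 0 ≤ K := le_trans (abs_nonneg _) (hK 0 (by simp [unitI]))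
  refine ⟨Real.log (K + 1), ?_⟩
  intro μ hμ hint
  haveI := hμ.1
  have hmeas : MeasurableSet unitI := by
    show MeasurableSet (Set.Icc (0:ℝ) 1); exact measurableSet_Icc
  have hbound : ∀ x ∈ unitI, Real.log |deriv f x| ≤ Real.log (K + 1) := by
    intro x hx
    rcases eq_or_lt_of_le (abs_nonneg (deriv f x)) with h0 | h0
    · rw [← h0, Real.log_zero]
      exact Real.log_nonneg (by linarith)
    · exact Real.log_le_log h0 (by linarith [hK x hx])
  have hcompl : μ unitIᶜ = 0 := by
    have h1 : μ unitI = 1 := hμ.2.1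
    have h2 := measure_compl hmeas (by rw [h1]; exact ENNReal.one_ne_top)
    rw [h1, measure_univ] at h2
    simpa using h2
  have hae : ∀ᵐ x ∂μ, Real.log |deriv f x| ≤ Real.log (K + 1) := by
    have hmem : ∀ᵐ x ∂μ, x ∈ unitI := by
      rw [MeasureTheory.ae_iff]
      exact hcompl
    filter_upwards [hmem] with x hx using hbound x hx
  calc lyap f μ = ∫ x, Real.log |deriv f x| ∂μ := rfl
    _ ≤ ∫ _, Real.log (K + 1) ∂μ := integral_mono_ae hint (integrable_const _) hae
    _ = Real.log (K + 1) := by simp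

private lemma mEnt_nonneg (f : ℝ → ℝ) (hf : MapClassF f) (μ : Measure ℝ)
    (hμ : InMf f μ) : 0 ≤ mEnt f μ := by
  classical
  have hpart : IsFinPartition ({unitI} : Finset (Set ℝ)) := by
    refine ⟨?_, ?_, ?_⟩
    · intro A hA
      rw [Finset.mem_singleton] at hA
      subst hA
      show MeasurableSet (Set.Icc (0:ℝ) 1); exact measurableSet_Icc
    · simp
    · intro A hA B hB hAB
      rw [Finset.mem_singleton] at hA hB
      exact absurd (hA.trans hB.symm) hAB
  have hHn : ∀ n : ℕ, Hn f μ ({unitI} : Finset (Set ℝ)) n = 0 := by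
    intro n
    unfold Hn
    apply Finset.sum_eq_zero
    intro σ _
    have hone : μ (⋂ j : Fin n, f^[(j : ℕ)] ⁻¹' (σ j).1) = 1 := by
      have hsub : unitI ⊆ ⋂ j : Fin n, f^[(j : ℕ)] ⁻¹' (σ j).1 := by
        intro x hx
        simp only [Set.mem_iInter, Set.mem_preimage]
        intro j
        have hj : (σ j).1 = unitI := Finset.mem_singleton.mp (σ j).2
        rw [hj]
        exact (hf.mapsTo.iterate (j : ℕ)) hx
      haveI := hμ.1
      refine le_antisymm prob_le_one ?_
      calc (1 : ℝ≥0∞) = μ unitI := hμ.2.1.symm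
        _ ≤ _ := measure_mono hsub
    rw [hone]
    simp [Real.negMulLog]
  have hlim : Filter.limsup
      (fun n : ℕ => Hn f μ ({unitI} : Finset (Set ℝ)) n / n) Filter.atTop = 0 := by
    have hfun : (fun n : ℕ => Hn f μ ({unitI} : Finset (Set ℝ)) n / n)
        = fun _ => (0 : ℝ) := by
      funext n
      rw [hHn n, zero_div]
    rw [hfun]
    exact Filter.limsup_const 0
  unfold mEnt
  by_cases hbdd : BddAbove (Set.range fun P : {P : Finset (Set ℝ) // IsFinPartition P} =>
      Filter.limsup (fun n : ℕ => Hn f μ P.1 n / n) Filter.atTop)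
  · calc (0:ℝ) = _ := hlim.symm
      _ ≤ _ := le_ciSup hbdd (⟨({unitI} : Finset (Set ℝ)), hpart⟩ :
          {P : Finset (Set ℝ) // IsFinPartition P})
  · rw [Real.iSup_of_not_bddAbove hbdd]

end IT

namespace IT

/-- For `f ∈ 𝓕` and `t ∈ (t⁻, t⁺)`, measures whose free energy with respect to
`ψ_t` is close enough to `p(t)` have entropy bounded away from zero. -/
theorem entropy_bounded_below_near_pressure (f : ℝ → ℝ) (hf : MapClassF f) (t : ℝ)
    (ht : tMinus f < (t : EReal) ∧ (t : EReal) < tPlus f) :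
    ∃ η : ℝ, 0 < η ∧ ∃ ε : ℝ, 0 < ε ∧ ∀ μ : Measure ℝ, InMf f μ → LyapFinite f μ →
      press f t - ε < mEnt f μ - t * lyap f μ → η < mEnt f μ := by
  classical
  obtain ⟨ht1, ht2⟩ := ht
  unfold tPlus at ht2
  unfold tMinus at ht1
  obtain ⟨s2, hs2, hts2⟩ := lt_sSup_iff.mp ht2
  obtain ⟨t₂, rfl, hcond₂⟩ := hs2
  have htt₂ : t < t₂ := by exact_mod_cast hts2
  obtain ⟨s1, hs1, hst1⟩ := sInf_lt_iff.mp ht1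
  obtain ⟨t₁, rfl, hcond₁⟩ := hs1
  have ht₁t : t₁ < t := by exact_mod_cast hst1
  by_cases hM : ∃ μ : Measure ℝ, InMf f μ ∧ LyapFinite f μ
  swap
  · exact ⟨1, one_pos, 1, one_pos, fun μ h1 h2 _ => absurd ⟨μ, h1, h2⟩ hM⟩
  obtain ⟨μ₀, hμ₀, hL0⟩ := hM
  obtain ⟨L, hL⟩ := lyap_le_bound f hf
  have hEne : (Eset f).Nonempty := ⟨lyap f μ₀, mem_Eset hμ₀ hL0⟩
  have hEbdd : BddAbove (Eset f) := by
    refine ⟨L, ?_⟩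
    rintro x ⟨μ, h1, h2, rfl⟩
    exact hL μ h1 h2
  have hlamM : ∀ μ : Measure ℝ, InMf f μ → LyapFinite f μ → lyap f μ ≤ lamM f := by
    intro μ h1 h2
    rw [lamM_eq]
    exact le_csSup hEbdd (mem_Eset h1 h2)
  have hSne : ∀ u : ℝ, (Sset f u).Nonempty := fun u => ⟨_, mem_Sset hμ₀ hL0⟩
  have hexceed : ∀ u c : ℝ, c < press f u → ∃ x ∈ Sset f u, c < x := by
    intro u c hc
    rw [press_eq] at hc
    exact exists_lt_of_lt_csSup (hSne u) hc
  by_cases hb : BddAbove (Sset f t)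
  · -- the free-energy set at t is bounded above
    by_cases htpos : 0 < t
    · -- t > 0 : Lyapunov exponents are bounded below
      have he : BddBelow (Eset f) := by
        by_contra hne
        obtain ⟨C, hC⟩ := hb
        obtain ⟨y, hyE, hy⟩ := not_bddBelow_iff.mp hne ((-C) / t)
        obtain ⟨μ', h1', h2', rfl⟩ := hyE
        have hy' : lyap f μ' * t < -C := (lt_div_iff₀ htpos).mp hy
        have hCx : mEnt f μ' - t * lyap f μ' ≤ C := hC (mem_Sset h1' h2')
        have h0 : 0 ≤ mEnt f μ' := mEnt_nonneg f hf μ' h1'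
        nlinarith
      have hlamm : ∀ μ : Measure ℝ, InMf f μ → LyapFinite f μ → lamm f ≤ lyap f μ := by
        intro μ h1 h2
        rw [lamm_eq]
        exact csInf_le he (mem_Eset h1 h2)
      obtain ⟨x₂, hx₂S, hx₂⟩ := hexceed t₂ _ hcond₂
      obtain ⟨μ₂, h1₂, h2₂, rfl⟩ := hx₂S
      have hxt : -(lamm f) * t < mEnt f μ₂ - t * lyap f μ₂ := by
        have hp : 0 ≤ (t₂ - t) * (lyap f μ₂ - lamm f) :=
          mul_nonneg (by linarith) (by linarith [hlamm μ₂ h1₂ h2₂])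
        nlinarith
      have hptlt : -(lamm f) * t < press f t := by
        rw [press_eq]
        exact lt_of_lt_of_le hxt (le_csSup hb (mem_Sset h1₂ h2₂))
      refine ⟨(press f t + lamm f * t) / 3, by linarith,
        (press f t + lamm f * t) / 3, by linarith, ?_⟩
      intro μ h1 h2 h3
      have hmul : t * lamm f ≤ t * lyap f μ :=
        mul_le_mul_of_nonneg_left (hlamm μ h1 h2) htpos.le
      linarith
    · -- t ≤ 0
      have htle : t ≤ 0 := not_lt.mp htpos
      obtain ⟨x₁, hx₁S, hx₁⟩ := hexceed t₁ _ hcond₁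
      obtain ⟨μ₁, h1₁, h2₁, rfl⟩ := hx₁S
      have hxt : -(lamM f) * t < mEnt f μ₁ - t * lyap f μ₁ := by
        have hp : 0 ≤ (t - t₁) * (lamM f - lyap f μ₁) :=
          mul_nonneg (by linarith) (by linarith [hlamM μ₁ h1₁ h2₁])
        nlinarith
      have hptlt : -(lamM f) * t < press f t := by
        rw [press_eq]
        exact lt_of_lt_of_le hxt (le_csSup hb (mem_Sset h1₁ h2₁))
      refine ⟨(press f t + lamM f * t) / 3, by linarith,
        (press f t + lamM f * t) / 3, by linarith, ?_⟩
      intro μ h1 h2 h3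
      have hmul : t * lamM f ≤ t * lyap f μ :=
        mul_le_mul_of_nonpos_left (hlamM μ h1 h2) htle
      linarith
  · -- the free-energy set at t is unbounded above
    have hpt : press f t = 0 := by
      rw [press_eq]
      exact Real.sSup_of_not_bddAbove hb
    have hb₂ : ¬ BddAbove (Sset f t₂) := by
      intro hB
      obtain ⟨C₂, hC₂⟩ := hB
      apply hb
      refine ⟨C₂ + (t₂ - t) * lamM f, ?_⟩
      rintro x ⟨μ, h1, h2, rfl⟩
      have hc : mEnt f μ - t₂ * lyap f μ ≤ C₂ := hC₂ (mem_Sset h1 h2)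
      have hp : 0 ≤ (t₂ - t) * (lamM f - lyap f μ) :=
        mul_nonneg (by linarith) (by linarith [hlamM μ h1 h2])
      nlinarith
    have hpt₂ : press f t₂ = 0 := by
      rw [press_eq]
      exact Real.sSup_of_not_bddAbove hb₂
    have hlz : 0 < lamm f * t₂ := by
      rw [hpt₂] at hcond₂
      linarith
    have he : BddBelow (Eset f) := by
      by_contra hne
      have h0 : lamm f = 0 := by
        rw [lamm_eq]
        exact Real.sInf_of_not_bddBelow hne
      rw [h0, zero_mul] at hlz
      exact lt_irrefl 0 hlz
    have hlamm : ∀ μ : Measure ℝ, InMf f μ → LyapFinite f μ → lamm f ≤ lyap f μ := by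
      intro μ h1 h2
      rw [lamm_eq]
      exact csInf_le he (mem_Eset h1 h2)
    by_cases htpos : 0 < t
    · -- t > 0 : then lamm f > 0 and we are done directly
      have ht₂pos : 0 < t₂ := htpos.trans htt₂
      have hlampos : 0 < lamm f := by
        by_contra h
        push_neg at h
        have h2 : 0 ≤ (-lamm f) * t₂ := mul_nonneg (by linarith) ht₂pos.le
        nlinarith
      have hpos : 0 < t * lamm f := mul_pos htpos hlampos
      refine ⟨t * lamm f / 3, by linarith, t * lamm f / 3, by linarith, ?_⟩
      intro μ h1 h2 h3
      rw [hpt] at h3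
      by_contra h4
      push_neg at h4
      have hmul : t * lamm f ≤ t * lyap f μ :=
        mul_le_mul_of_nonneg_left (hlamm μ h1 h2) htpos.le
      linarith
    · -- t ≤ 0
      have htle : t ≤ 0 := not_lt.mp htpos
      by_cases hb₁ : BddAbove (Sset f t₁)
      · exfalso
        apply hb
        obtain ⟨C₁, hC₁⟩ := hb₁
        refine ⟨C₁ + (t₁ - t) * lamm f, ?_⟩
        rintro x ⟨μ, h1, h2, rfl⟩
        have hc : mEnt f μ - t₁ * lyap f μ ≤ C₁ := hC₁ (mem_Sset h1 h2)
        have hp : 0 ≤ (t - t₁) * (lyap f μ - lamm f) :=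
          mul_nonneg (by linarith) (by linarith [hlamm μ h1 h2])
        nlinarith
      · have hpt₁ : press f t₁ = 0 := by
          rw [press_eq]
          exact Real.sSup_of_not_bddAbove hb₁
        have hlM : 0 < lamM f * t₁ := by
          rw [hpt₁] at hcond₁
          linarith
        have ht₁neg : t₁ < 0 := lt_of_lt_of_le ht₁t htle
        have hlMneg : lamM f < 0 := by
          by_contra h
          push_neg at h
          have h2 : 0 ≤ lamM f * (-t₁) := mul_nonneg h (by linarith)
          nlinarith
        have htneg : t < 0 := by
          rcases lt_or_eq_of_le htle with h | h
          · exact h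
          · exfalso
            have ht₂pos : 0 < t₂ := by rw [← h]; exact htt₂
            have hlampos : 0 < lamm f := by
              by_contra h'
              push_neg at h'
              have h2 : 0 ≤ (-lamm f) * t₂ := mul_nonneg (by linarith) ht₂pos.le
              nlinarith
            have hle : lamm f ≤ lamM f := by
              rw [lamm_eq, lamM_eq]
              exact csInf_le_csSup hEne he hEbdd
            linarith
        have ha : 0 < t * lamM f := mul_pos_of_neg_of_neg htneg hlMneg
        refine ⟨t * lamM f / 3, by linarith, t * lamM f / 3, by linarith, ?_⟩
        intro μ h1 h2 h3
        rw [hpt] at h3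
        by_contra h4
        push_neg at h4
        have hmul : t * lamM f ≤ t * lyap f μ :=
          mul_le_mul_of_nonpos_left (hlamM μ h1 h2) htle
        linarith


end IT
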